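/- There exist an open set Ω ⊆ ℝ² and a function f : Ω → ℝ such that: f ∈ 1-AC²(Ω,ℝ); f is differentiable almost everywhere; f satisfies the Luzin (N) property (ℒ¹(f(E)) = 0 whenever E ⊆ Ω with ℒ²(E) = 0); and f is not ½-absolutely continuous. In particular f ∈ 1-AC²(Ω,ℝ) but f ∉ AC_H²(Ω,ℝ). -/

import Mathlib

open MeasureTheory Metric Set Filter

noncomputable section

/-- The closed interval (box) `[a,b]` in `ℝ²`. -/
def box (a b : EuclideanSpace ℝ (Fin 2)) : Set (EuclideanSpace ℝ (Fin 2)) :=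
  {x | ∀ ν, a ν ≤ x ν ∧ x ν ≤ b ν}

/-- `f` is `α`-absolutely continuous on `Ω ⊆ ℝ²` (for `α ∈ (0,1]`): for every `ε > 0`
there is `δ > 0` such that for every finite collection of pairwise disjoint `α`-regular
intervals `[aᵢ,bᵢ] ⊆ Ω` (those with `ℒ²([aᵢ,bᵢ]) ≥ α·(max_ν |aᵢ,ν − bᵢ,ν|)²`),
`∑ ℒ²([aᵢ,bᵢ]) < δ` implies `∑ |f(bᵢ) − f(aᵢ)|² < ε`; `1-AC` is the case `α = 1`. -/
def AlphaAC (α : ℝ) (f : EuclideanSpace ℝ (Fin 2) → ℝ)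
    (Ω : Set (EuclideanSpace ℝ (Fin 2))) : Prop :=
  ∀ ε > 0, ∃ δ > 0, ∀ (k : ℕ) (a b : Fin k → EuclideanSpace ℝ (Fin 2)),
    (∀ i, ∀ ν, a i ν ≤ b i ν) →
    (∀ i, box (a i) (b i) ⊆ Ω) →
    (Pairwise fun i j => Disjoint (box (a i) (b i)) (box (a j) (b j))) →
    (∀ i, α * (⨆ ν, |a i ν - b i ν|) ^ 2 ≤ (volume (box (a i) (b i))).toReal) →
    ∑ i, (volume (box (a i) (b i))).toReal < δ →
    ∑ i, |f (b i) - f (a i)| ^ 2 < ε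

/-- `f ∈ AC_H` on `Ω ⊆ ℝ²`: there is `λ ∈ (0,1)` such that for every `ε > 0` there is
`δ > 0` such that for every finite collection of pairwise disjoint closed Euclidean balls
`B(xᵢ,rᵢ) ⊆ Ω`, `∑ ℒ²(B(xᵢ,rᵢ)) < δ` implies `∑ osc(f, B(xᵢ,λrᵢ))² < ε`. -/
def ACH (f : EuclideanSpace ℝ (Fin 2) → ℝ) (Ω : Set (EuclideanSpace ℝ (Fin 2))) : Prop :=
  ∃ lam ∈ Set.Ioo (0:ℝ) 1, ∀ ε > 0, ∃ δ > 0,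
    ∀ (k : ℕ) (x : Fin k → EuclideanSpace ℝ (Fin 2)) (r : Fin k → ℝ),
    (∀ i, 0 < r i) →
    (∀ i, closedBall (x i) (r i) ⊆ Ω) →
    (Pairwise fun i j => Disjoint (closedBall (x i) (r i)) (closedBall (x j) (r j))) →
    ∑ i, (volume (closedBall (x i) (r i))).toReal < δ →
    ∑ i, (Metric.diam (f '' closedBall (x i) (lam * r i))) ^ 2 < ε

/-- Auxiliary: the volume of a box in `ℝ²` is the product of its side lengths. -/
lemma volume_box (a b : EuclideanSpace ℝ (Fin 2)) : volume (box a b) =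
    ENNReal.ofReal (b 0 - a 0) * ENNReal.ofReal (b 1 - a 1) := by
  have h1 : box a b = (MeasurableEquiv.toLp 2 (Fin 2 → ℝ)).symm ⁻¹'
      (Set.univ.pi fun ν => Icc (a ν) (b ν)) := by
    ext x
    simp [box, Set.mem_pi, MeasurableEquiv.toLp, Icc, forall_and]
    exact Iff.rfl
  rw [h1, (EuclideanSpace.volume_preserving_symm_measurableEquiv_toLp (Fin 2)).measure_preimage
      ((MeasurableSet.univ_pi fun ν => measurableSet_Icc).nullMeasurableSet),
    volume_pi_pi]
  simp [Real.volume_Icc, Fin.prod_univ_two]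

/-- Auxiliary: a supremum over `Fin 2` is a max. -/
lemma iSup_fin2 (g : Fin 2 → ℝ) : (⨆ ν, g ν) = max (g 0) (g 1) :=
  le_antisymm
    (ciSup_le fun ν => by fin_cases ν <;> [exact le_max_left _ _; exact le_max_right _ _])
    (max_le (le_ciSup (Finite.bddAbove_range g) 0) (le_ciSup (Finite.bddAbove_range g) 1))

/-- The counterexample function: the indicator of the open half-plane below the diagonal. -/
def myf : EuclideanSpace ℝ (Fin 2) → ℝ := fun x => if x 1 < x 0 then 1 else 0

/-- There exist an open set `Ω ⊆ ℝ²` and a function `f : Ω → ℝ` such that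
`f ∈ 1-AC²(Ω,ℝ)`, `f` is differentiable a.e. on `Ω`, `f` has the Luzin (N) property, but
`f` is not ½-absolutely continuous; in particular `f ∉ AC_H²(Ω,ℝ)`. -/
theorem exists_oneAC_WDN_not_halfAC :
    ∃ (Ω : Set (EuclideanSpace ℝ (Fin 2))) (f : EuclideanSpace ℝ (Fin 2) → ℝ),
      IsOpen Ω ∧ AlphaAC 1 f Ω ∧
      (∀ᵐ x ∂(volume : Measure (EuclideanSpace ℝ (Fin 2))), x ∈ Ω → DifferentiableAt ℝ f x) ∧
      (∀ E ⊆ Ω, volume E = 0 → volume (f '' E) = 0) ∧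
      ¬ AlphaAC (1/2) f Ω ∧ ¬ ACH f Ω := by
  refine ⟨Set.univ, myf, isOpen_univ, ?_, ?_, ?_, ?_, ?_⟩
  · -- 1-AC : only squares are 1-regular, and myf is constant along the main diagonal
    intro ε hε
    refine ⟨1, one_pos, fun k a b hab _ _ hreg _ => ?_⟩
    have : ∀ i ∈ Finset.univ, |myf (b i) - myf (a i)| ^ 2 = 0 := by
      intro i _
      set s0 := b i 0 - a i 0 with hs0def
      set s1 := b i 1 - a i 1 with hs1def
      have hs0 : 0 ≤ s0 := by simpa [hs0def] using sub_nonneg.2 (hab i 0)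
      have hs1 : 0 ≤ s1 := by simpa [hs1def] using sub_nonneg.2 (hab i 1)
      have hvol : (volume (box (a i) (b i))).toReal = s0 * s1 := by
        rw [volume_box, ENNReal.toReal_mul, ENNReal.toReal_ofReal hs0,
          ENNReal.toReal_ofReal hs1]
      have hsup : (⨆ ν, |a i ν - b i ν|) = max s0 s1 := by
        rw [iSup_fin2]
        congr 1
        · rw [abs_sub_comm, abs_of_nonneg hs0]
        · rw [abs_sub_comm, abs_of_nonneg hs1]
      have hr := hreg i
      rw [hvol, hsup, one_mul] at hr
      have heq : s0 = s1 := by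
        rcases max_cases s0 s1 with ⟨hm, _⟩ | ⟨hm, _⟩ <;> rw [hm] at hr <;> nlinarith
      have : myf (b i) = myf (a i) := by
        unfold myf
        have : b i 1 < b i 0 ↔ a i 1 < a i 0 := by
          constructor <;> intro h
          · have : b i 0 - a i 0 = b i 1 - a i 1 := heq
            linarith
          · have : b i 0 - a i 0 = b i 1 - a i 1 := heq
            linarith
        simp [this]
      simp [this]
    rw [Finset.sum_eq_zero this]
    exact hε
  · -- a.e. differentiability : myf is locally constant off the (null) diagonal
    have hL : ∃ L : EuclideanSpace ℝ (Fin 2) →ₗ[ℝ] ℝ, ∀ x, L x = x 0 - x 1 :=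
      ⟨{ toFun := fun x => x 0 - x 1
         map_add' := fun x y => by
           show (x + y) 0 - (x + y) 1 = _
           simp [PiLp.add_apply]; ring
         map_smul' := fun c x => by
           show (c • x) 0 - (c • x) 1 = _
           simp [PiLp.smul_apply]; ring }, fun x => rfl⟩
    obtain ⟨L, hLapp⟩ := hL
    have hK : volume (↑(LinearMap.ker L) : Set (EuclideanSpace ℝ (Fin 2))) = 0 := by
      apply Measure.addHaar_submodule
      intro h
      have : EuclideanSpace.single (0 : Fin 2) (1:ℝ) ∈ LinearMap.ker L := h ▸ Submodule.mem_top
      rw [LinearMap.mem_ker, hLapp] at this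
      simp [EuclideanSpace.single_apply] at this
    have hD : volume {x : EuclideanSpace ℝ (Fin 2) | x 0 = x 1} = 0 := by
      convert hK using 2
      ext x
      simp [LinearMap.mem_ker, hLapp, sub_eq_zero]
    filter_upwards [measure_eq_zero_iff_ae_notMem.mp hD] with x hx _
    replace hx : x 0 ≠ x 1 := hx
    rcases lt_or_gt_of_ne hx with h | h
    · have hU : IsOpen {y : EuclideanSpace ℝ (Fin 2) | y 0 < y 1} :=
        isOpen_lt (EuclideanSpace.proj (0:Fin 2)).continuous
          (EuclideanSpace.proj (1:Fin 2)).continuous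
      have : myf =ᶠ[nhds x] fun _ => (0:ℝ) := by
        filter_upwards [hU.mem_nhds h] with y hy
        exact if_neg (by have : y 0 < y 1 := hy; linarith)
      exact (differentiableAt_const (0:ℝ)).congr_of_eventuallyEq this
    · have hU : IsOpen {y : EuclideanSpace ℝ (Fin 2) | y 1 < y 0} :=
        isOpen_lt (EuclideanSpace.proj (1:Fin 2)).continuous
          (EuclideanSpace.proj (0:Fin 2)).continuous
      have : myf =ᶠ[nhds x] fun _ => (1:ℝ) := by
        filter_upwards [hU.mem_nhds h] with y hy
        exact if_pos hy
      exact (differentiableAt_const (1:ℝ)).congr_of_eventuallyEq this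
  · -- Luzin (N) : the range of myf is finite
    intro E _ _
    refine measure_mono_null ?_ ((Set.toFinite ({0, 1} : Set ℝ)).measure_zero volume)
    rintro y ⟨z, _, rfl⟩
    show myf z ∈ ({0, 1} : Set ℝ)
    unfold myf; split <;> simp
  · -- myf is not 1/2-AC : use a thin rectangle crossing the diagonal
    intro h
    obtain ⟨δ, hδ, H⟩ := h (1/2) (by norm_num)
    set s : ℝ := min 1 (Real.sqrt δ) with hs_def
    have hs : 0 < s := lt_min one_pos (Real.sqrt_pos.2 hδ)
    have hs2 : s ^ 2 ≤ δ := by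
      have h1 : s ≤ Real.sqrt δ := min_le_right _ _
      nlinarith [Real.sq_sqrt hδ.le, Real.sqrt_nonneg δ, hs.le]
    set a : Fin 1 → EuclideanSpace ℝ (Fin 2) :=
      fun _ => (show EuclideanSpace ℝ (Fin 2) from WithLp.toLp 2 ![0, s/4])
    set b : Fin 1 → EuclideanSpace ℝ (Fin 2) :=
      fun _ => (show EuclideanSpace ℝ (Fin 2) from WithLp.toLp 2 ![s, 3*s/4])
    have ha0 : ∀ i : Fin 1, a i 0 = 0 := fun i => rfl
    have ha1 : ∀ i : Fin 1, a i 1 = s/4 := fun i => rfl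
    have hb0 : ∀ i : Fin 1, b i 0 = s := fun i => rfl
    have hb1 : ∀ i : Fin 1, b i 1 = 3*s/4 := fun i => rfl
    have hvol : ∀ i : Fin 1, (volume (box (a i) (b i))).toReal = s * (s/2) := by
      intro i
      rw [volume_box, ha0 i, ha1 i, hb0 i, hb1 i, ENNReal.toReal_mul,
        ENNReal.toReal_ofReal (by linarith), ENNReal.toReal_ofReal (by linarith)]
      ring
    have key := H 1 a b
      (fun i ν => by fin_cases ν <;> simp [ha0 i, ha1 i, hb0 i, hb1 i] <;> linarith)
      (fun i => Set.subset_univ _)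
      (by intro i j hij; exact absurd (Subsingleton.elim i j) hij)
      (fun i => by
        have hsup : (⨆ ν, |a i ν - b i ν|) = s := by
          rw [iSup_fin2, ha0 i, ha1 i, hb0 i, hb1 i]
          rw [abs_of_nonpos (by linarith), abs_of_nonpos (by linarith)]
          rw [max_eq_left (by linarith)]
          ring
        rw [hsup, hvol i]; nlinarith)
      (by rw [Fin.sum_univ_one, hvol 0]
          calc s * (s/2) = s^2/2 := by ring
            _ < δ := by linarith [hs2, sq_nonneg s, mul_pos hs hs])
    have hfa : myf (a 0) = 0 := if_neg (by rw [ha0 0, ha1 0]; intro hh; linarith)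
    have hfb : myf (b 0) = 1 := if_pos (by rw [hb0 0, hb1 0]; linarith)
    rw [Fin.sum_univ_one, hfa, hfb] at key
    norm_num at key
  · -- myf is not in AC_H : use a small ball centered on the diagonal
    rintro ⟨lam, ⟨hlam0, hlam1⟩, H⟩
    obtain ⟨δ, hδ, H⟩ := H (1/2) (by norm_num)
    set C : ℝ := (volume (ball (0 : EuclideanSpace ℝ (Fin 2)) 1)).toReal with hC_def
    have hC0 : 0 ≤ C := ENNReal.toReal_nonneg
    set r : ℝ := min 1 (Real.sqrt (δ / (C + 1))) with hr_def
    have hr : 0 < r := lt_min one_pos (Real.sqrt_pos.2 (by positivity))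
    have hrC : r ^ 2 * C < δ := by
      have h1 : r ≤ Real.sqrt (δ / (C + 1)) := min_le_right _ _
      have h2 : r ^ 2 ≤ δ / (C + 1) := by
        nlinarith [Real.sq_sqrt (show (0:ℝ) ≤ δ / (C+1) by positivity),
          Real.sqrt_nonneg (δ/(C+1)), hr.le]
      have h3 : δ / (C + 1) * C < δ := by
        rw [div_mul_eq_mul_div, div_lt_iff₀ (by positivity)]
        nlinarith
      nlinarith [mul_le_mul_of_nonneg_right h2 hC0]
    have hvol : (volume (closedBall (0 : EuclideanSpace ℝ (Fin 2)) r)).toReal = r ^ 2 * C := by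
      rw [Measure.addHaar_closedBall _ _ hr.le]
      rw [ENNReal.toReal_mul, ENNReal.toReal_ofReal (by positivity)]
      congr 1
      · norm_num [finrank_euclideanSpace_fin]
    have key := H 1 (fun _ => 0) (fun _ => r) (fun _ => hr)
      (fun i => Set.subset_univ _)
      (by intro i j hij; exact absurd (Subsingleton.elim i j) hij)
      (by rw [Fin.sum_univ_one, hvol]; exact hrC)
    rw [Fin.sum_univ_one] at key
    have hlr : 0 < lam * r := mul_pos hlam0 hr
    have h0mem : (0:ℝ) ∈ myf '' closedBall (0 : EuclideanSpace ℝ (Fin 2)) (lam * r) := by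
      refine ⟨0, mem_closedBall_self hlr.le, ?_⟩
      exact if_neg (by norm_num)
    have h1mem : (1:ℝ) ∈ myf '' closedBall (0 : EuclideanSpace ℝ (Fin 2)) (lam * r) := by
      refine ⟨EuclideanSpace.single (0 : Fin 2) (lam * r), ?_, ?_⟩
      · rw [mem_closedBall, dist_zero_right, EuclideanSpace.norm_single]
        exact le_of_eq (abs_of_pos hlr)
      · refine if_pos ?_
        rw [EuclideanSpace.single_apply, EuclideanSpace.single_apply]
        norm_num [hlr]
    have hbdd : Bornology.IsBounded
        (myf '' closedBall (0 : EuclideanSpace ℝ (Fin 2)) (lam * r)) := by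
      refine Bornology.IsBounded.subset (Set.Finite.isBounded (Set.toFinite ({0, 1} : Set ℝ))) ?_
      rintro y ⟨z, _, rfl⟩
      show myf z ∈ ({0, 1} : Set ℝ)
      unfold myf; split <;> simp
    have hdiam : (1:ℝ) ≤ Metric.diam
        (myf '' closedBall (0 : EuclideanSpace ℝ (Fin 2)) (lam * r)) := by
      have := Metric.dist_le_diam_of_mem hbdd h1mem h0mem
      simpa [Real.dist_eq] using this
    nlinarith [key, hdiam]
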